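/- Let d ≥ 2 and let G ≤ S_d be a transitive subgroup containing single cycles of lengths e₁, e₂, e₃ with 2 ≤ e₁ ≤ e₂ ≤ e₃ ≤ d and e₁ + e₂ + e₃ = 2d + 1. Then G is a primitive permutation group. -/

import Mathlib

open MulAction Pointwise

/-- Auxiliary: if every point `x` lies in a "block" `S x` of size `b`, these blocks are
equal when they meet, and a set `s` is a union of such blocks, then `b` divides `s.ncard`. -/
lemma aux_block_dvd {α : Type*} [Fintype α] [DecidableEq α] (b : ℕ)
    (S : α → Set α) (hmem : ∀ x, x ∈ S x)
    (heq : ∀ x y, y ∈ S x → S y = S x)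
    (hcard : ∀ x, (S x).ncard = b)
    (s : Set α) (hs : ∀ x ∈ s, S x ⊆ s) : b ∣ s.ncard := by
  classical
  set bl : α → Finset α := fun x => (Set.toFinite (S x)).toFinset with hbl
  have hblmem : ∀ x y, (y ∈ bl x ↔ y ∈ S x) := fun x y => Set.Finite.mem_toFinset _
  set t : Finset α := (Set.toFinite s).toFinset with ht
  have htmem : ∀ y, (y ∈ t ↔ y ∈ s) := fun y => Set.Finite.mem_toFinset _
  have hns : s.ncard = t.card := Set.ncard_eq_toFinset_card s _
  rw [hns]
  rw [Finset.card_eq_sum_card_fiberwise (f := bl) (t := t.image bl)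
      (fun x hx => Finset.mem_image_of_mem bl hx)]
  apply Finset.dvd_sum
  intro u hu
  obtain ⟨x, hx, rfl⟩ := Finset.mem_image.mp hu
  have hfib : t.filter (fun y => bl y = bl x) = bl x := by
    ext y
    simp only [Finset.mem_filter]
    constructor
    · rintro ⟨hy, h⟩
      rw [← h, hblmem]; exact hmem y
    · intro hy
      have hyS : y ∈ S x := (hblmem x y).1 hy
      refine ⟨(htmem y).2 (hs x ((htmem x).1 hx) hyS), ?_⟩
      ext z
      rw [hblmem, hblmem, heq x y hyS]
  rw [hfib]
  have : (bl x).card = b := by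
    rw [← hcard x, Set.ncard_eq_toFinset_card (S x)]
  rw [this]

/-- Let `d ≥ 2` and let `G ≤ S_d` be a transitive subgroup containing single
cycles of lengths `e₁ ≤ e₂ ≤ e₃` with `2 ≤ e₁`, `e₃ ≤ d` and `e₁ + e₂ + e₃ = 2d + 1`.
Then `G` is a primitive permutation group: every block for the action of `G` on the `d`
points is trivial (a subsingleton or the whole set). -/
theorem stmt1 (d : ℕ) (hd : 2 ≤ d) (G : Subgroup (Equiv.Perm (Fin d)))
    (htrans : MulAction.IsPretransitive G (Fin d))
    (e₁ e₂ e₃ : ℕ) (h1 : 2 ≤ e₁) (h12 : e₁ ≤ e₂) (h23 : e₂ ≤ e₃) (h3d : e₃ ≤ d)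
    (hsum : e₁ + e₂ + e₃ = 2 * d + 1)
    (hg₁ : ∃ g ∈ G, g.IsCycle ∧ g.support.card = e₁)
    (hg₂ : ∃ g ∈ G, g.IsCycle ∧ g.support.card = e₂)
    (hg₃ : ∃ g ∈ G, g.IsCycle ∧ g.support.card = e₃) :
    ∀ B : Set (Fin d), MulAction.IsBlock G B → B.Subsingleton ∨ B = Set.univ := by
  intro B hB
  by_contra hcon
  push_neg at hcon
  obtain ⟨hns, hne⟩ := hcon
  have hBnt : B.Nontrivial := hns
  obtain ⟨x₀, hx₀, y₀, hy₀, hxy₀⟩ := hBnt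
  set b := B.ncard with hbdef
  have hdcard : Nat.card (Fin d) = d := by simp
  have hb2 : 2 ≤ b := (Set.one_lt_ncard (Set.toFinite B)).2 ⟨x₀, hx₀, y₀, hy₀, hxy₀⟩
  have hdvd : b ∣ d := by
    have := hB.ncard_dvd_card ⟨x₀, hx₀⟩
    rwa [hdcard] at this
  have hblt : b < d := by
    have hss : B ⊂ Set.univ := Set.ssubset_univ_iff.2 hne
    have := Set.ncard_lt_ncard hss Set.finite_univ
    rwa [Set.ncard_univ, hdcard] at this
  have h2b : 2 * b ≤ d := by
    have hsub : b ∣ d - b := Nat.dvd_sub hdvd dvd_rfl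
    have := Nat.le_of_dvd (by omega) hsub
    omega
  -- assign to each point a translate of B containing it
  have hex : ∀ x : Fin d, ∃ g : G, g • x₀ = x := fun x => htrans.exists_smul_eq x₀ x
  set σ : Fin d → G := fun x => (hex x).choose with hσ
  have hσs : ∀ x, (σ x) • x₀ = x := fun x => (hex x).choose_spec
  set S : Fin d → Set (Fin d) := fun x => (σ x) • B with hS
  have hmemS : ∀ x, x ∈ S x := by
    intro x
    have h' : (σ x) • x₀ ∈ (σ x) • B := Set.smul_mem_smul_set hx₀
    rw [hσs x] at h'
    exact h'
  have heqt : ∀ (g h : G) (y : Fin d), y ∈ g • B → y ∈ h • B → g • B = h • B := by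
    intro g h y hy hy'
    by_contra hne'
    exact Set.disjoint_left.1 (hB hne') hy hy'
  have heqS : ∀ x y, y ∈ S x → S y = S x := fun x y hy => heqt _ _ y (hmemS y) hy
  have hcardS : ∀ x, (S x).ncard = b := fun x => Set.ncard_smul_set _ _
  -- key dichotomy for cycles
  have key : ∀ c : Equiv.Perm (Fin d), c ∈ G → c.IsCycle →
      c.support.card ≤ b ∨ b ∣ c.support.card := by
    intro c hcG hcyc
    obtain ⟨x, hx, -⟩ := id hcyc
    by_cases hall : ∀ y : Fin d, c y ≠ y → y ∈ S x
    · left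
      have hsub : (c.support : Set (Fin d)) ⊆ S x := by
        intro y hy
        exact hall y (Equiv.Perm.mem_support.1 (Finset.mem_coe.1 hy))
      calc c.support.card = (c.support : Set (Fin d)).ncard := (Set.ncard_coe_finset _).symm
        _ ≤ (S x).ncard := Set.ncard_le_ncard hsub (Set.toFinite _)
        _ = b := hcardS x
    · right
      push_neg at hall
      obtain ⟨y, hy, hynot⟩ := hall
      set γ : G := ⟨c, hcG⟩ with hγ
      have hγapp : ∀ (n : ℕ) (z : Fin d), (γ ^ n) • z = (c ^ n) z := fun n z => rfl
      -- every translate containing a support point is inside the support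
      have hblocks : ∀ z : Fin d, c z ≠ z → S z ⊆ (c.support : Set (Fin d)) := by
        intro z hz
        have hmove : γ • S z ≠ S z := by
          intro hfix
          have hpow : ∀ n : ℕ, (γ ^ n) • S z = S z := by
            intro n
            induction n with
            | zero => simp
            | succ n ih => rw [pow_succ, mul_smul, hfix, ih]
          have hsupp_sub : ∀ w : Fin d, c w ≠ w → w ∈ S z := by
            intro w hw
            obtain ⟨n, hn⟩ := hcyc.exists_pow_eq hz hw
            have hmem' : (γ ^ n) • z ∈ (γ ^ n) • S z := Set.smul_mem_smul_set (hmemS z)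
            rw [hpow n] at hmem'
            rw [hγapp n z, hn] at hmem'
            exact hmem'
          have hxz : x ∈ S z := hsupp_sub x hx
          have hyz : y ∈ S z := hsupp_sub y hy
          exact hynot ((heqS z x hxz) ▸ hyz)
        have hdisj : Disjoint (γ • S z) (S z) := by
          have h1' : γ • S z = (γ * σ z) • B := (mul_smul γ (σ z) B).symm
          have h2' : (γ * σ z) • B ≠ (σ z) • B := by
            rw [← h1']; exact hmove
          have := hB h2'
          rwa [← h1'] at this
        intro w hw
        rw [Finset.mem_coe, Equiv.Perm.mem_support]
        intro hcw
        have hcw' : c w ∈ γ • S z := Set.smul_mem_smul_set hw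
        rw [hcw] at hcw'
        exact Set.disjoint_left.1 hdisj hcw' hw
      have := aux_block_dvd b S hmemS heqS hcardS (c.support : Set (Fin d))
        (fun z hz => hblocks z (Equiv.Perm.mem_support.1 (Finset.mem_coe.1 hz)))
      rwa [Set.ncard_coe_finset] at this
  obtain ⟨g₁, hg₁G, hc₁, he₁⟩ := hg₁
  obtain ⟨g₂, hg₂G, hc₂, he₂⟩ := hg₂
  obtain ⟨g₃, hg₃G, hc₃, he₃⟩ := hg₃
  have k₁ := he₁ ▸ key g₁ hg₁G hc₁
  have k₂ := he₂ ▸ key g₂ hg₂G hc₂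
  have k₃ := he₃ ▸ key g₃ hg₃G hc₃
  rcases k₂ with h2le | h2dvd
  · omega
  · rcases k₃ with h3le | h3dvd
    · omega
    · have hd2 : b ∣ 2 * d := hdvd.mul_left 2
      have h23dvd : b ∣ e₂ + e₃ := dvd_add h2dvd h3dvd
      have hdvd1 : b ∣ 2 * d - (e₂ + e₃) := Nat.dvd_sub hd2 h23dvd
      have heq1 : 2 * d - (e₂ + e₃) = e₁ - 1 := by omega
      rw [heq1] at hdvd1
      rcases k₁ with h1le | h1dvd
      · have hlt : e₁ - 1 < b := by omega
        have := Nat.eq_zero_of_dvd_of_lt hdvd1 hlt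
        omega
      · have hone : b ∣ 1 := by
          have : e₁ - (e₁ - 1) = 1 := by omega
          exact this ▸ Nat.dvd_sub h1dvd hdvd1
        have := Nat.le_of_dvd one_pos hone
        omega
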